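/- Let Q be an F₂-valued quadratic form on a finite-dimensional F₂-vector space V with associated alternating bilinear form Ω, and suppose Ω is nondegenerate on V, so that V admits a symplectic basis e₁, f₁, …, e_r, f_r (with Ω(e_i, f_j) = δ_{ij}, Ω(e_i,e_j) = Ω(f_i,f_j) = 0). Then the Arf invariant Σ Q(e_i)Q(f_i) does not depend on the choice of symplectic basis. -/

import Mathlib

open Finset

/-- The character `(-1)^t` on `F₂`, valued in `ℤ`. -/
def arfChi (t : ZMod 2) : ℤ := if t = 0 then 1 else -1

lemma arfChi_add : ∀ a b : ZMod 2, arfChi (a + b) = arfChi a * arfChi b := by decide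

lemma arfChi_inj : ∀ a b : ZMod 2, arfChi a = arfChi b → a = b := by decide

lemma arfChi_magic : ∀ a b : ZMod 2,
    (arfChi 0 + arfChi b) + (arfChi a + arfChi (a + b + 1)) = 2 * arfChi (a * b) := by decide

lemma arfChi_sum {ι : Type*} (s : Finset ι) (c : ι → ZMod 2) :
    ∏ i ∈ s, arfChi (c i) = arfChi (∑ i ∈ s, c i) := by
  induction s using Finset.cons_induction with
  | empty => simp [arfChi]
  | cons a s ha ih => rw [Finset.prod_cons, Finset.sum_cons, arfChi_add, ih]

lemma sum_zmod2 (g : ZMod 2 → ℤ) : ∑ x : ZMod 2, g x = g 0 + g 1 := by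
  have h : (univ : Finset (ZMod 2)) = {0, 1} := by decide
  rw [h, Finset.sum_insert (by decide), Finset.sum_singleton]

lemma Q_sum_of_orth {V : Type*} [AddCommGroup V] [Module (ZMod 2) V]
    (Ω : V →ₗ[ZMod 2] V →ₗ[ZMod 2] ZMod 2)
    (Q : V → ZMod 2) (hQ : ∀ u v, Q (u + v) = Q u + Q v + Ω u v) (hQ0 : Q 0 = 0)
    {ι : Type*} (s : Finset ι) (w : ι → V)
    (h : ∀ i ∈ s, ∀ j ∈ s, i ≠ j → Ω (w i) (w j) = 0) :
    Q (∑ i ∈ s, w i) = ∑ i ∈ s, Q (w i) := by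
  induction s using Finset.cons_induction with
  | empty => simpa
  | cons a s ha ih =>
    rw [Finset.sum_cons, Finset.sum_cons, hQ,
      ih (fun i hi j hj hij => h i (Finset.mem_cons_of_mem hi) j (Finset.mem_cons_of_mem hj) hij)]
    have hz : Ω (w a) (∑ i ∈ s, w i) = 0 := by
      rw [map_sum]
      refine Finset.sum_eq_zero fun j hj => ?_
      exact h a (Finset.mem_cons_self a s) j (Finset.mem_cons_of_mem hj)
        (by rintro rfl; exact ha hj)
    rw [hz, add_zero]

lemma arf_char_sum {V : Type*} [AddCommGroup V] [Module (ZMod 2) V] [Fintype V]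
    (Ω : V →ₗ[ZMod 2] V →ₗ[ZMod 2] ZMod 2)
    (halt : ∀ v, Ω v v = 0)
    (Q : V → ZMod 2) (hQ : ∀ u v, Q (u + v) = Q u + Q v + Ω u v)
    (r : ℕ) (e f : Fin r → V)
    (hb : ∃ b : Module.Basis (Fin r ⊕ Fin r) (ZMod 2) V,
      ∀ i, b (Sum.inl i) = e i ∧ b (Sum.inr i) = f i)
    (hef : ∀ i j, Ω (e i) (f j) = if i = j then 1 else 0)
    (hee : ∀ i j, Ω (e i) (e j) = 0) (hff : ∀ i j, Ω (f i) (f j) = 0) :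
    ∑ v : V, arfChi (Q v) = 2 ^ r * arfChi (∑ i : Fin r, Q (e i) * Q (f i)) := by
  obtain ⟨b, hbe⟩ := hb
  -- Q 0 = 0
  have hQ0 : Q 0 = 0 := by
    have h := hQ 0 0
    simp only [add_zero, zero_add, map_zero, LinearMap.zero_apply] at h
    exact (left_eq_add.mp h)
  -- symmetry of Ω in characteristic 2
  have hsymm : ∀ u v : V, Ω v u = Ω u v := by
    intro u v
    have h := halt (u + v)
    simp only [map_add, LinearMap.add_apply, halt u, halt v, zero_add, add_zero] at h
    have h2 := neg_eq_of_add_eq_zero_left h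
    rw [CharTwo.neg_eq] at h2
    exact h2.symm
  have hfe : ∀ i j, i ≠ j → Ω (f i) (e j) = 0 := by
    intro i j hij
    rw [hsymm, hef, if_neg (fun hh => hij hh.symm)]
  -- the reindexing equivalence
  let E : (Fin r → ZMod 2 × ZMod 2) ≃ (Fin r ⊕ Fin r → ZMod 2) :=
    { toFun := fun g => Sum.elim (fun i => (g i).1) (fun i => (g i).2)
      invFun := fun c i => (c (Sum.inl i), c (Sum.inr i))
      left_inv := fun g => rfl
      right_inv := fun c => funext fun j => by cases j <;> rfl }
  let T : (Fin r → ZMod 2 × ZMod 2) ≃ V := E.trans b.equivFun.symm.toEquiv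
  have hT : ∀ g, T g = ∑ i : Fin r, ((g i).1 • e i + (g i).2 • f i) := by
    intro g
    show b.equivFun.symm (E g) = _
    rw [Module.Basis.equivFun_symm_apply, Fintype.sum_sum_type, ← Finset.sum_add_distrib]
    refine Finset.sum_congr rfl fun i _ => ?_
    rw [(hbe i).1, (hbe i).2]
    rfl
  -- transport the sum
  rw [← Equiv.sum_comp T (fun v => arfChi (Q v))]
  -- compute Q on each vector
  have hQT : ∀ g, arfChi (Q (T g)) =
      ∏ i : Fin r, arfChi (Q ((g i).1 • e i + (g i).2 • f i)) := by
    intro g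
    rw [hT g, Q_sum_of_orth Ω Q hQ hQ0 _ _ ?_, ← arfChi_sum]
    intro i _ j _ hij
    have h1 : ∀ (x y : ZMod 2) (u v : V), Ω u v = 0 → Ω (x • u) (y • v) = 0 := by
      intro x y u v h
      simp [h]
    have hef0 : Ω (e i) (f j) = 0 := by rw [hef, if_neg hij]
    simp only [map_add, LinearMap.add_apply]
    rw [h1 _ _ _ _ (hee i j), h1 _ _ _ _ hef0,
      h1 _ _ _ _ (hfe i j hij), h1 _ _ _ _ (hff i j)]
    simp
  simp only [hQT]
  -- split as a product over i
  have hsplit := Finset.prod_univ_sum (fun _ : Fin r => (univ : Finset (ZMod 2 × ZMod 2)))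
    (fun i p => arfChi (Q (p.1 • e i + p.2 • f i)))
  rw [Fintype.piFinset_univ] at hsplit
  rw [← hsplit]
  -- compute each factor
  have hfac : ∀ i : Fin r,
      ∑ p : ZMod 2 × ZMod 2, arfChi (Q (p.1 • e i + p.2 • f i))
        = 2 * arfChi (Q (e i) * Q (f i)) := by
    intro i
    rw [Fintype.sum_prod_type]
    rw [sum_zmod2 (fun x => ∑ y : ZMod 2, arfChi (Q (x • e i + y • f i)))]
    rw [sum_zmod2 (fun y => arfChi (Q ((0 : ZMod 2) • e i + y • f i)))]
    rw [sum_zmod2 (fun y => arfChi (Q ((1 : ZMod 2) • e i + y • f i)))]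
    have he1 : Q (e i + f i) = Q (e i) + Q (f i) + 1 := by
      rw [hQ, hef, if_pos rfl]
    simp only [zero_smul, one_smul, zero_add, add_zero, hQ0, he1]
    exact arfChi_magic (Q (e i)) (Q (f i))
  rw [Finset.prod_congr rfl fun i _ => hfac i, Finset.prod_mul_distrib,
    Finset.prod_const, arfChi_sum, Finset.card_univ, Fintype.card_fin]

theorem stmt7 {V : Type*} [AddCommGroup V] [Module (ZMod 2) V]
    [FiniteDimensional (ZMod 2) V]
    (Ω : V →ₗ[ZMod 2] V →ₗ[ZMod 2] ZMod 2)
    (halt : ∀ v, Ω v v = 0)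
    (hnd : ∀ v, (∀ u, Ω v u = 0) → v = 0)
    (Q : V → ZMod 2) (hQ : ∀ u v, Q (u + v) = Q u + Q v + Ω u v)
    (r : ℕ) (e f e' f' : Fin r → V)
    -- `e₁,f₁,…,e_r,f_r` is a basis of `V`
    (hb : ∃ b : Module.Basis (Fin r ⊕ Fin r) (ZMod 2) V,
      ∀ i, b (Sum.inl i) = e i ∧ b (Sum.inr i) = f i)
    -- `e'₁,f'₁,…,e'_r,f'_r` is a basis of `V`
    (hb' : ∃ b : Module.Basis (Fin r ⊕ Fin r) (ZMod 2) V,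
      ∀ i, b (Sum.inl i) = e' i ∧ b (Sum.inr i) = f' i)
    -- both bases are symplectic
    (hef : ∀ i j, Ω (e i) (f j) = if i = j then 1 else 0)
    (hee : ∀ i j, Ω (e i) (e j) = 0) (hff : ∀ i j, Ω (f i) (f j) = 0)
    (hef' : ∀ i j, Ω (e' i) (f' j) = if i = j then 1 else 0)
    (hee' : ∀ i j, Ω (e' i) (e' j) = 0) (hff' : ∀ i j, Ω (f' i) (f' j) = 0) :
    ∑ i : Fin r, Q (e i) * Q (f i) = ∑ i : Fin r, Q (e' i) * Q (f' i) := by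
  obtain ⟨b, hbe⟩ := hb
  letI : Fintype V := Module.fintypeOfFintype b
  have h1 := arf_char_sum Ω halt Q hQ r e f ⟨b, hbe⟩ hef hee hff
  have h2 := arf_char_sum Ω halt Q hQ r e' f' hb' hef' hee' hff'
  exact arfChi_inj _ _ (mul_left_cancel₀ (by positivity) (h1.symm.trans h2))
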